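/- Let d ≥ 1, let ℝ^d be ordered by a closed cone X₊ with non-empty topological interior that is polyhedral, i.e., X₊ is an intersection of finitely many closed half spaces (equivalently, the nonnegative span of finitely many vectors), and let A ∈ ℝ^{d×d}. Then the following are equivalent: (i) the semigroup (e^{tA})_{t≥0} is uniformly eventually nonnegative; (ii) it is individually eventually nonnegative; (iii) it is weakly eventually nonnegative. -/

import Mathlib

open scoped Matrix

namespace EvNonnegAux

variable {d : ℕ}

/-- The cone generated by a finite family of vectors. -/
def coneOf {ι : Type} [Fintype ι] (v : ι → (Fin d → ℝ)) : Set (Fin d → ℝ) :=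
  {x | ∃ c : ι → ℝ, (∀ i, 0 ≤ c i) ∧ x = ∑ i, c i • v i}

lemma mem_coneOf_self {ι : Type} [Fintype ι] [DecidableEq ι] (v : ι → (Fin d → ℝ)) (i : ι) :
    v i ∈ coneOf v := by
  refine ⟨fun j => if j = i then 1 else 0, fun j => by dsimp only; split <;> norm_num, ?_⟩
  simp [ite_smul]

lemma zero_mem_coneOf {ι : Type} [Fintype ι] (v : ι → (Fin d → ℝ)) : (0 : Fin d → ℝ) ∈ coneOf v :=
  ⟨0, fun _ => le_refl _, by simp⟩

lemma coneOf_add {ι : Type} [Fintype ι] {v : ι → (Fin d → ℝ)} {x y : Fin d → ℝ}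
    (hx : x ∈ coneOf v) (hy : y ∈ coneOf v) : x + y ∈ coneOf v := by
  obtain ⟨c, hc, rfl⟩ := hx
  obtain ⟨c', hc', rfl⟩ := hy
  exact ⟨c + c', fun i => add_nonneg (hc i) (hc' i), by
    rw [← Finset.sum_add_distrib]; simp [add_smul]⟩

lemma coneOf_smul {ι : Type} [Fintype ι] {v : ι → (Fin d → ℝ)} {x : Fin d → ℝ} {l : ℝ}
    (hl : 0 ≤ l) (hx : x ∈ coneOf v) : l • x ∈ coneOf v := by
  obtain ⟨c, hc, rfl⟩ := hx
  exact ⟨fun i => l * c i, fun i => mul_nonneg hl (hc i), by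
    rw [Finset.smul_sum]; simp [smul_smul]⟩

lemma sum_mem {ι : Type} [Fintype ι] {M : Set (Fin d → ℝ)} (h0 : (0 : Fin d → ℝ) ∈ M)
    (hadd : ∀ x ∈ M, ∀ y ∈ M, x + y ∈ M)
    (hsmul : ∀ (l : ℝ), 0 ≤ l → ∀ x ∈ M, l • x ∈ M)
    {c : ι → ℝ} (hc : ∀ i, 0 ≤ c i) {w : ι → Fin d → ℝ} (hw : ∀ i, w i ∈ M) :
    ∑ i, c i • w i ∈ M := by
  refine Finset.sum_induction _ (· ∈ M) (fun a b ha hb => hadd a ha b hb) h0 ?_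
  exact fun i _ => hsmul (c i) (hc i) (w i) (hw i)

lemma coneOf_subset {ι : Type} [Fintype ι] {w : ι → Fin d → ℝ} {M : Set (Fin d → ℝ)}
    (h0 : (0 : Fin d → ℝ) ∈ M)
    (hadd : ∀ x ∈ M, ∀ y ∈ M, x + y ∈ M)
    (hsmul : ∀ (l : ℝ), 0 ≤ l → ∀ x ∈ M, l • x ∈ M)
    (hw : ∀ i, w i ∈ M) : coneOf w ⊆ M := by
  rintro x ⟨c, hc, rfl⟩
  exact sum_mem h0 hadd hsmul hc hw

/-- The whole space is a finitely generated cone. -/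
lemma univ_coneOf (d : ℕ) :
    (Set.univ : Set (Fin d → ℝ)) =
      coneOf (Sum.elim (fun k : Fin d => Pi.single k (1 : ℝ))
        (fun k : Fin d => -(Pi.single k (1 : ℝ)))) := by
  ext x
  simp only [Set.mem_univ, true_iff]
  refine ⟨Sum.elim (fun k => max (x k) 0) (fun k => max (-x k) 0), ?_, ?_⟩
  · rintro (k | k) <;> exact le_max_right _ _
  · rw [Fintype.sum_sum_type]
    simp only [Sum.elim_inl, Sum.elim_inr]
    rw [← Finset.sum_add_distrib]
    have : ∀ k : Fin d,
        max (x k) 0 • (Pi.single k (1 : ℝ) : Fin d → ℝ) + max (-x k) 0 • (-(Pi.single k (1:ℝ) : Fin d → ℝ))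
          = (Pi.single k (x k) : Fin d → ℝ) := by
      intro k
      rw [smul_neg, ← sub_eq_add_neg, ← sub_smul]
      have : max (x k) 0 - max (-x k) 0 = x k := by
        rcases le_total (x k) 0 with h | h
        · rw [max_eq_right h, max_eq_left (by linarith)]; ring
        · rw [max_eq_left h, max_eq_right (by linarith)]; ring
      rw [this]
      ext m
      by_cases hm : m = k
      · subst hm; simp
      · simp [Pi.single_eq_of_ne hm]
    simp_rw [this]
    exact (Finset.univ_sum_single x).symm

lemma dot_sum {ι : Type} [Fintype ι] (a : Fin d → ℝ) (f : ι → Fin d → ℝ) :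
    a ⬝ᵥ (∑ i, f i) = ∑ i, a ⬝ᵥ f i := by
  simp only [dotProduct, Finset.sum_apply, Finset.mul_sum]
  exact Finset.sum_comm

lemma sum_dot {ι : Type} [Fintype ι] (f : ι → Fin d → ℝ) (x : Fin d → ℝ) :
    (∑ i, f i) ⬝ᵥ x = ∑ i, f i ⬝ᵥ x := by
  simp only [dotProduct, Finset.sum_apply, Finset.sum_mul]
  exact Finset.sum_comm

lemma fm_step {ι : Type} [Fintype ι] [DecidableEq ι] (u : ι → (Fin d → ℝ)) (a : Fin d → ℝ) :
    ∃ (κ : Type) (_ : Fintype κ) (w : κ → (Fin d → ℝ)),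
      coneOf u ∩ {x | 0 ≤ a ⬝ᵥ x} = coneOf w := by
  classical
  set w : (ι ⊕ ι × ι) → (Fin d → ℝ) :=
    Sum.elim (fun i => if 0 ≤ a ⬝ᵥ u i then u i else 0)
      (fun p => if 0 ≤ a ⬝ᵥ u p.1 ∧ a ⬝ᵥ u p.2 < 0
        then (a ⬝ᵥ u p.1) • u p.2 - (a ⬝ᵥ u p.2) • u p.1 else 0) with hwdef
  refine ⟨ι ⊕ ι × ι, inferInstance, w, Set.Subset.antisymm ?_ ?_⟩
  · -- hard direction
    rintro x ⟨⟨c, hc, rfl⟩, hx⟩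
    simp only [Set.mem_setOf_eq] at hx
    set p : ι → ℝ := fun i => if 0 ≤ a ⬝ᵥ u i then c i else 0 with hpdef
    set q : ι → ℝ := fun i => if 0 ≤ a ⬝ᵥ u i then 0 else c i with hqdef
    have hp : ∀ i, 0 ≤ p i := fun i => by
      rw [hpdef]; dsimp only; split
      · exact hc i
      · exact le_refl 0
    have hq : ∀ i, 0 ≤ q i := fun i => by
      rw [hqdef]; dsimp only; split
      · exact le_refl 0
      · exact hc i
    have hpa : ∀ i, p i ≠ 0 → 0 ≤ a ⬝ᵥ u i := fun i hi => by
      by_contra h; exact hi (by rw [hpdef]; simp [h])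
    have hqa : ∀ i, q i ≠ 0 → a ⬝ᵥ u i < 0 := fun i hi => by
      by_contra h
      exact hi (by rw [hqdef]; simp [not_lt.mp h])
    have hcpq : ∀ i, c i • u i = p i • u i + q i • u i := fun i => by
      rw [hpdef, hqdef]; dsimp only; split <;> simp
    set S : ℝ := ∑ i, p i * (a ⬝ᵥ u i) with hSdef
    set T : ℝ := -∑ i, q i * (a ⬝ᵥ u i) with hTdef
    have hS : 0 ≤ S := Finset.sum_nonneg fun i _ => by
      rcases eq_or_ne (p i) 0 with h | h
      · rw [h]; simp
      · exact mul_nonneg (hp i) (hpa i h)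
    have hT : 0 ≤ T := by
      rw [hTdef, neg_nonneg]
      refine Finset.sum_nonpos fun i _ => ?_
      rcases eq_or_ne (q i) 0 with h | h
      · rw [h]; simp
      · exact mul_nonpos_of_nonneg_of_nonpos (hq i) (hqa i h).le
    have hsplit : ∑ i, c i • u i = (∑ i, p i • u i) + (∑ i, q i • u i) := by
      rw [← Finset.sum_add_distrib]
      exact Finset.sum_congr rfl fun i _ => hcpq i
    have h1 : a ⬝ᵥ (∑ i, c i • u i) = S - T := by
      rw [hsplit, dotProduct_add, dot_sum, dot_sum]
      simp only [dotProduct_smul, smul_eq_mul]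
      rw [hSdef, hTdef]; ring
    have hST : T ≤ S := by rw [h1] at hx; linarith
    by_cases hS0 : S = 0
    · -- then T = 0 and q ≡ 0
      have hT0 : T = 0 := le_antisymm (hS0 ▸ hST) hT
      have hsum : ∑ i, q i * (a ⬝ᵥ u i) = 0 := by
        rw [hTdef] at hT0; linarith
      have hq0 : ∀ i, q i = 0 := by
        intro i
        have hterm := (Finset.sum_eq_zero_iff_of_nonpos (fun j _ => ?_)).mp hsum i
          (Finset.mem_univ i)
        · by_contra h
          nlinarith [hterm, (hq i).lt_of_ne (Ne.symm h), hqa i h]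
        · rcases eq_or_ne (q j) 0 with h | h
          · rw [h]; simp
          · exact mul_nonpos_of_nonneg_of_nonpos (hq j) (hqa j h).le
      refine ⟨Sum.elim p 0, ?_, ?_⟩
      · rintro (i | ij)
        · exact hp i
        · exact le_refl 0
      · rw [Fintype.sum_sum_type]
        simp only [Sum.elim_inl, Sum.elim_inr, Pi.zero_apply, zero_smul,
          Finset.sum_const_zero, add_zero]
        have hterm : ∀ i, p i • w (Sum.inl i) = p i • u i := fun i => by
          rcases eq_or_ne (p i) 0 with h | h
          · rw [h]; simp
          · rw [hwdef]; simp [hpa i h]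
        rw [Finset.sum_congr rfl fun i _ => hterm i, hsplit]
        simp [hq0]
    · have hSpos : 0 < S := lt_of_le_of_ne hS (Ne.symm hS0)
      refine ⟨Sum.elim (fun i => p i * (1 - T / S)) (fun ij => p ij.1 * q ij.2 / S), ?_, ?_⟩
      · rintro (i | ij)
        · refine mul_nonneg (hp i) ?_
          have : T / S ≤ 1 := (div_le_one hSpos).mpr hST
          linarith
        · exact div_nonneg (mul_nonneg (hp ij.1) (hq ij.2)) hS
      · rw [Fintype.sum_sum_type]
        simp only [Sum.elim_inl, Sum.elim_inr]
        have h1 : ∑ i, (p i * (1 - T / S)) • w (Sum.inl i)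
            = (1 - T / S) • ∑ i, p i • u i := by
          rw [Finset.smul_sum]
          refine Finset.sum_congr rfl fun i _ => ?_
          rcases eq_or_ne (p i) 0 with h | h
          · rw [h]; simp
          · rw [hwdef]
            simp only [Sum.elim_inl, if_pos (hpa i h)]
            rw [smul_smul]
            congr 1
            ring
        have h2 : ∀ ij : ι × ι, (p ij.1 * q ij.2 / S) • w (Sum.inr ij)
            = (p ij.1 * q ij.2 / S) • ((a ⬝ᵥ u ij.1) • u ij.2 - (a ⬝ᵥ u ij.2) • u ij.1) := by
          rintro ⟨i, j⟩
          by_cases hcond : 0 ≤ a ⬝ᵥ u i ∧ a ⬝ᵥ u j < 0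
          · rw [hwdef]; simp [hcond]
          · have hz : p i * q j = 0 := by
              rcases not_and_or.mp hcond with h | h
              · have hzz : p i = 0 := by
                  by_contra hne; exact h (hpa i hne)
                rw [hzz, zero_mul]
              · have hzz : q j = 0 := by
                  by_contra hne; exact h (hqa j hne)
                rw [hzz, mul_zero]
            simp [hz]
        have expand : ∀ i j : ι, (p i * q j / S) • ((a ⬝ᵥ u i) • u j - (a ⬝ᵥ u j) • u i)
            = (p i * (a ⬝ᵥ u i) * (q j / S)) • u j
              - ((q j * (a ⬝ᵥ u j)) * (p i / S)) • u i := by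
          intro i j
          rw [smul_sub, smul_smul, smul_smul]
          congr 2 <;> ring
        have hA : ∑ i, ∑ j, (p i * (a ⬝ᵥ u i) * (q j / S)) • u j = ∑ j, q j • u j := by
          rw [Finset.sum_comm]
          refine Finset.sum_congr rfl fun j _ => ?_
          rw [← Finset.sum_smul, ← Finset.sum_mul]
          congr 1
          field_simp
          rw [hSdef]; ring
        have hB : ∑ i, ∑ j, ((q j * (a ⬝ᵥ u j)) * (p i / S)) • u i
            = (-(T / S)) • ∑ i, p i • u i := by
          rw [Finset.smul_sum]
          refine Finset.sum_congr rfl fun i _ => ?_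
          rw [← Finset.sum_smul, ← Finset.sum_mul, smul_smul]
          congr 1
          have hTs : ∑ j, q j * (a ⬝ᵥ u j) = -T := by rw [hTdef]; ring
          rw [hTs]
          field_simp
        have h3 : ∑ ij : ι × ι, (p ij.1 * q ij.2 / S) •
              ((a ⬝ᵥ u ij.1) • u ij.2 - (a ⬝ᵥ u ij.2) • u ij.1)
            = (∑ j, q j • u j) + (T / S) • ∑ i, p i • u i := by
          rw [Fintype.sum_prod_type]
          simp_rw [expand]
          rw [Finset.sum_congr rfl fun i _ => Finset.sum_sub_distrib _ _,
            Finset.sum_sub_distrib, hA, hB, neg_smul, sub_neg_eq_add]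
        rw [h1, Finset.sum_congr rfl fun ij _ => h2 ij, h3, hsplit,
          sub_smul, one_smul]
        abel
  · -- easy direction
    refine coneOf_subset ?_ ?_ ?_ ?_
    · exact ⟨zero_mem_coneOf u, by simp⟩
    · rintro x ⟨hx1, hx2⟩ y ⟨hy1, hy2⟩
      refine ⟨coneOf_add hx1 hy1, ?_⟩
      simp only [Set.mem_setOf_eq, dotProduct_add] at *
      exact add_nonneg hx2 hy2
    · rintro l hl x ⟨hx1, hx2⟩
      refine ⟨coneOf_smul hl hx1, ?_⟩
      simp only [Set.mem_setOf_eq, dotProduct_smul, smul_eq_mul] at *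
      exact mul_nonneg hl hx2
    · rintro (i | ⟨i, j⟩)
      · rw [hwdef]
        dsimp only [Sum.elim_inl]
        split
        · exact ⟨mem_coneOf_self u i, by assumption⟩
        · exact ⟨zero_mem_coneOf u, by simp⟩
      · rw [hwdef]
        dsimp only [Sum.elim_inr]
        split
        · rename_i hcond
          constructor
          · rw [sub_eq_add_neg, ← neg_smul]
            exact coneOf_add (coneOf_smul hcond.1 (mem_coneOf_self u j))
              (coneOf_smul (by linarith [hcond.2]) (mem_coneOf_self u i))
          · simp only [Set.mem_setOf_eq, dotProduct_sub, dotProduct_smul,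
              smul_eq_mul]
            nlinarith [hcond.1, hcond.2]
        · exact ⟨zero_mem_coneOf u, by simp⟩

lemma coneOf_equiv_fin {ι : Type} (hι : Fintype ι) (v : ι → (Fin d → ℝ)) :
    ∃ (m : ℕ) (w : Fin m → (Fin d → ℝ)), @coneOf d ι hι v = coneOf w := by
  letI := hι
  refine ⟨Fintype.card ι, v ∘ (Fintype.equivFin ι).symm, ?_⟩
  ext x
  constructor
  · rintro ⟨c, hc, rfl⟩
    refine ⟨c ∘ (Fintype.equivFin ι).symm, fun k => hc _, ?_⟩
    exact Fintype.sum_equiv (Fintype.equivFin ι) _ _ (fun i => by simp [Function.comp])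
  · rintro ⟨c, hc, rfl⟩
    refine ⟨c ∘ (Fintype.equivFin ι), fun i => hc _, ?_⟩
    exact Fintype.sum_equiv (Fintype.equivFin ι).symm _ _ (fun k => by simp [Function.comp])

lemma fm_step_fin {m : ℕ} (u : Fin m → (Fin d → ℝ)) (a : Fin d → ℝ) :
    ∃ (m' : ℕ) (w : Fin m' → (Fin d → ℝ)),
      coneOf u ∩ {x | 0 ≤ a ⬝ᵥ x} = coneOf w := by
  obtain ⟨κ, hκ, w, hw⟩ := fm_step u a
  obtain ⟨m', w', hw'⟩ := coneOf_equiv_fin hκ w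
  exact ⟨m', w', hw.trans hw'⟩

lemma halfspaces_coneOf (n : ℕ) (a : Fin n → (Fin d → ℝ)) :
    ∃ (m : ℕ) (w : Fin m → (Fin d → ℝ)),
      {x : Fin d → ℝ | ∀ i, 0 ≤ a i ⬝ᵥ x} = coneOf w := by
  induction n with
  | zero =>
    have huniv : {x : Fin d → ℝ | ∀ i, 0 ≤ a i ⬝ᵥ x} = Set.univ := by
      ext x
      simp only [Set.mem_setOf_eq, Set.mem_univ, iff_true]
      intro i
      exact i.elim0
    rw [huniv, univ_coneOf d]
    obtain ⟨m, w, hw⟩ := coneOf_equiv_fin inferInstance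
      (Sum.elim (fun k : Fin d => Pi.single k (1 : ℝ))
        (fun k : Fin d => -(Pi.single k (1 : ℝ))))
    exact ⟨m, w, hw⟩
  | succ n ih =>
    obtain ⟨m, w, hw⟩ := ih (fun i => a i.succ)
    have hsplit : {x : Fin d → ℝ | ∀ i, 0 ≤ a i ⬝ᵥ x}
        = coneOf w ∩ {x | 0 ≤ a 0 ⬝ᵥ x} := by
      rw [← hw]
      ext x
      constructor
      · intro h; exact ⟨fun i => h i.succ, h 0⟩
      · rintro ⟨h1, h2⟩ i
        refine Fin.cases h2 (fun j => h1 j) i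
    rw [hsplit]
    exact fm_step_fin w (a 0)

lemma bipolar {C : Set (Fin d → ℝ)} (hC_closed : IsClosed C)
    (hC_smul : ∀ (l : ℝ), 0 ≤ l → ∀ x ∈ C, l • x ∈ C)
    (h0 : (0 : Fin d → ℝ) ∈ C) (hC_convex : Convex ℝ C)
    {n : ℕ} {v : Fin n → (Fin d → ℝ)} (hCv : C = coneOf v) :
    ∃ (m : ℕ) (w : Fin m → (Fin d → ℝ)),
      (∀ k, ∀ x ∈ C, 0 ≤ w k ⬝ᵥ x) ∧
      (∀ x : Fin d → ℝ, (∀ k, 0 ≤ w k ⬝ᵥ x) → x ∈ C) := by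
  obtain ⟨m, w, hw⟩ := halfspaces_coneOf n v
  refine ⟨m, w, ?_, ?_⟩
  · intro k x hx
    have hwk : w k ∈ {y : Fin d → ℝ | ∀ i, 0 ≤ v i ⬝ᵥ y} := by
      rw [hw]; exact mem_coneOf_self w k
    rw [hCv] at hx
    obtain ⟨c, hc, rfl⟩ := hx
    rw [dot_sum]
    refine Finset.sum_nonneg fun i _ => ?_
    rw [dotProduct_smul, smul_eq_mul]
    refine mul_nonneg (hc i) ?_
    rw [dotProduct_comm]
    exact hwk i
  · intro x hx
    by_contra hxC
    obtain ⟨f, uu, hfu, hux⟩ := geometric_hahn_banach_closed_point hC_convex hC_closed hxC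
    have hu0 : 0 < uu := by simpa using hfu 0 h0
    have hfneg : ∀ b ∈ C, f b ≤ 0 := by
      intro b hb
      by_contra hfb
      push_neg at hfb
      have hl : 0 ≤ (uu + 1) / f b := div_nonneg (by linarith) hfb.le
      have hmem : ((uu + 1) / f b) • b ∈ C := hC_smul _ hl b hb
      have := hfu _ hmem
      rw [map_smul, smul_eq_mul] at this
      rw [div_mul_cancel₀] at this
      · linarith
      · exact ne_of_gt hfb
    set y : Fin d → ℝ := fun k => -f (Pi.single k 1) with hydef
    have hy : ∀ z : Fin d → ℝ, y ⬝ᵥ z = -f z := by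
      intro z
      have hz : f z = ∑ k, z k * f (Pi.single k 1) := by
        conv_lhs => rw [← Finset.univ_sum_single z]
        rw [map_sum]
        refine Finset.sum_congr rfl fun k _ => ?_
        have hzz : (Pi.single k (z k) : Fin d → ℝ) = z k • (Pi.single k 1 : Fin d → ℝ) := by
          ext m
          by_cases hm : m = k
          · subst hm; simp
          · simp [Pi.single_eq_of_ne hm]
        rw [hzz, map_smul, smul_eq_mul]
      rw [dotProduct, hz, hydef, ← Finset.sum_neg_distrib]
      exact Finset.sum_congr rfl fun k _ => by ring
    have hyd : y ∈ {y' : Fin d → ℝ | ∀ i, 0 ≤ v i ⬝ᵥ y'} := by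
      intro i
      rw [dotProduct_comm, hy]
      have hvi : v i ∈ C := hCv ▸ mem_coneOf_self v i
      linarith [hfneg _ hvi]
    rw [hw] at hyd
    obtain ⟨c, hc, hyeq⟩ := hyd
    have hnn : 0 ≤ y ⬝ᵥ x := by
      rw [hyeq, sum_dot]
      refine Finset.sum_nonneg fun k _ => ?_
      rw [smul_dotProduct, smul_eq_mul]
      exact mul_nonneg (hc k) (hx k)
    rw [hy] at hnn
    linarith

end EvNonnegAux

/-- Let `ℝ^d` (`d ≥ 1`) be ordered by a closed polyhedral cone `C` with
non-empty interior (polyhedral: `C` is the nonnegative span of finitely many vectors), and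
let `A` be a real `d × d` matrix. Then uniform, individual and weak eventual nonnegativity of
the semigroup `(e^{tA})_{t ≥ 0}` are all equivalent. -/
theorem eventual_nonnegativity_equivalences_of_polyhedral
    (d : ℕ) (hd : 1 ≤ d)
    (C : Set (Fin d → ℝ)) (hC_closed : IsClosed C)
    (hC_add : ∀ x ∈ C, ∀ y ∈ C, x + y ∈ C)
    (hC_smul : ∀ (l : ℝ), 0 ≤ l → ∀ x ∈ C, l • x ∈ C)
    (hC_pointed : C ∩ (-C) = {0})
    (hC_int : (interior C).Nonempty)
    (hC_poly : ∃ (n : ℕ) (v : Fin n → (Fin d → ℝ)),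
      C = {x : Fin d → ℝ | ∃ c : Fin n → ℝ, (∀ i, 0 ≤ c i) ∧ x = ∑ i, c i • v i})
    (A : Matrix (Fin d) (Fin d) ℝ) :
    ((∃ t₀ : ℝ, 0 ≤ t₀ ∧ ∀ t : ℝ, t₀ ≤ t → ∀ x ∈ C,
        NormedSpace.exp (t • A) *ᵥ x ∈ C) ↔
      (∀ x ∈ C, ∃ t₀ : ℝ, 0 ≤ t₀ ∧ ∀ t : ℝ, t₀ ≤ t →
        NormedSpace.exp (t • A) *ᵥ x ∈ C)) ∧
    ((∀ x ∈ C, ∃ t₀ : ℝ, 0 ≤ t₀ ∧ ∀ t : ℝ, t₀ ≤ t →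
        NormedSpace.exp (t • A) *ᵥ x ∈ C) ↔
      (∀ x ∈ C, ∀ y ∈ {y' : Fin d → ℝ | ∀ x' ∈ C, 0 ≤ y' ⬝ᵥ x'},
        ∃ t₀ : ℝ, 0 ≤ t₀ ∧ ∀ t : ℝ, t₀ ≤ t →
          0 ≤ y ⬝ᵥ (NormedSpace.exp (t • A) *ᵥ x))) := by
  classical
  obtain ⟨n, v, hCv⟩ := hC_poly
  have hCv' : C = EvNonnegAux.coneOf v := hCv
  obtain ⟨x0, hx0⟩ := hC_int
  have h0 : (0 : Fin d → ℝ) ∈ C := by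
    have := hC_smul 0 le_rfl x0 (interior_subset hx0)
    simpa using this
  have hconv : Convex ℝ C := by
    intro x hx y hy a b ha hb _
    exact hC_add _ (hC_smul a ha x hx) _ (hC_smul b hb y hy)
  constructor
  · constructor
    · rintro ⟨t₀, ht₀, h⟩ x hx
      exact ⟨t₀, ht₀, fun t ht => h t ht x hx⟩
    · intro h
      have hv : ∀ i, v i ∈ C := fun i => hCv' ▸ EvNonnegAux.mem_coneOf_self v i
      choose t₀f ht₀f1 ht₀f2 using fun i => h (v i) (hv i)
      refine ⟨∑ i, t₀f i, Finset.sum_nonneg (fun i _ => ht₀f1 i), ?_⟩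
      intro t ht x hx
      rw [hCv'] at hx ⊢
      obtain ⟨c, hc, rfl⟩ := hx
      have hmv : NormedSpace.exp (t • A) *ᵥ (∑ i, c i • v i)
          = ∑ i, c i • (NormedSpace.exp (t • A) *ᵥ v i) := by
        rw [← Matrix.mulVecLin_apply, map_sum]
        exact Finset.sum_congr rfl fun i _ => by rw [map_smul, Matrix.mulVecLin_apply]
      rw [hmv]
      refine EvNonnegAux.sum_mem (hCv' ▸ h0) ?_ ?_ hc (fun i => ?_)
      · intro a ha b hb
        exact hCv' ▸ hC_add a (hCv' ▸ ha) b (hCv' ▸ hb)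
      · intro l hl a ha
        exact hCv' ▸ hC_smul l hl a (hCv' ▸ ha)
      · refine hCv' ▸ ht₀f2 i t (le_trans ?_ ht)
        exact Finset.single_le_sum (fun j _ => ht₀f1 j) (Finset.mem_univ i)
  · obtain ⟨m, w, hwdual, hwbip⟩ :=
      EvNonnegAux.bipolar hC_closed hC_smul h0 hconv hCv'
    constructor
    · intro h x hx y hy
      obtain ⟨t₀, h1, h2⟩ := h x hx
      exact ⟨t₀, h1, fun t ht => hy _ (h2 t ht)⟩
    · intro h x hx
      choose t₀f ht1 ht2 using fun k : Fin m =>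
        h x hx (w k) (fun x' hx' => hwdual k x' hx')
      refine ⟨∑ k, t₀f k, Finset.sum_nonneg (fun k _ => ht1 k), fun t htt => ?_⟩
      refine hwbip _ (fun k => ht2 k t (le_trans ?_ htt))
      exact Finset.single_le_sum (fun j _ => ht1 j) (Finset.mem_univ k)
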